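/- arXiv:2010.08987 — 2 statements merged into one kernel-verified Lean document; each statement's English description precedes it below -/
import Mathlib

section
/- Fix p > 0 and let u ∈ C⁴(ℝ⁴) be a radially symmetric function satisfying the pointwise equation Δ(Δu)(x) = (1−|x|^p)·e^{4u(x)} for all x ∈ ℝ⁴, where Δ is the Laplacian on ℝ⁴. Then ∫_{ℝ⁴} (1+|x|^p)·e^{4u(x)} dx < ∞. -/
open MeasureTheory Real Filter Asymptotics

noncomputable section

abbrev E4 := EuclideanSpace ℝ (Fin 4)

/-- `u` is a normal solution of `Δ²u = K e^{4u}` on `ℝ⁴` with total curvature `Λ`. -/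
def NormalSolution (K u : E4 → ℝ) (Λ : ℝ) : Prop :=
  Continuous u ∧
  Integrable (fun y : E4 => K y * Real.exp (4 * u y)) ∧
  Λ = ∫ y : E4, K y * Real.exp (4 * u y) ∧
  ∃ c : ℝ, ∀ x : E4, u x =
    (1 / (8 * π ^ 2)) * ∫ y : E4, Real.log (‖y‖ / ‖x - y‖) * (K y * Real.exp (4 * u y)) + c

/-- `u` is radially symmetric. -/
def Radial (u : E4 → ℝ) : Prop := ∀ x y : E4, ‖x‖ = ‖y‖ → u x = u y

/-- The Euclidean Laplacian: trace of the second derivative. -/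
def lap (f : E4 → ℝ) (x : E4) : ℝ :=
  ∑ i : Fin 4, iteratedFDeriv ℝ 2 f x
    ![EuclideanSpace.single i (1 : ℝ), EuclideanSpace.single i (1 : ℝ)]

open Set Topology
open scoped ENNReal

local notation "⟪" x ", " y "⟫" => @inner ℝ _ _ x y

private lemma q_hasFDerivAt (x : E4) :
    HasFDerivAt (fun y : E4 => ⟪y, y⟫) ((2:ℝ) • (innerSL ℝ x : E4 →L[ℝ] ℝ)) x := by
  have h := (hasFDerivAt_id x).inner ℝ (hasFDerivAt_id x)
  refine h.congr_fderiv ?_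
  ext e
  simp [real_inner_comm x e, two_mul]

private lemma lap_radial (v v' : ℝ → ℝ) (a : ℝ) (V : E4 → ℝ) (x : E4)
    (hV : ∀ᶠ y in nhds x, V y = v ⟪y, y⟫)
    (hv : ∀ᶠ t in nhds (⟪x, x⟫ : ℝ), HasDerivAt v (v' t) t)
    (hv' : HasDerivAt v' a ⟪x, x⟫) :
    lap V x = 4 * ⟪x, x⟫ * a + 8 * v' ⟪x, x⟫ := by
  set t₀ : ℝ := ⟪x, x⟫ with ht₀
  -- eventually, fderiv V y = W y
  set W : E4 → (E4 →L[ℝ] ℝ) := fun y => (2 * v' ⟪y, y⟫) • (innerSL ℝ y : E4 →L[ℝ] ℝ) with hW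
  have hq : Continuous fun y : E4 => (⟪y, y⟫ : ℝ) := continuous_inner.comp (continuous_id.prodMk continuous_id)
  have hev : ∀ᶠ y in nhds x, fderiv ℝ V y = W y := by
    filter_upwards [hV.eventually_nhds, hq.continuousAt.eventually hv] with y hy hvy
    have h1 : HasFDerivAt (fun z : E4 => v ⟪z, z⟫) ((v' ⟪y, y⟫) • ((2:ℝ) • (innerSL ℝ y : E4 →L[ℝ] ℝ))) y :=
      HasDerivAt.comp_hasFDerivAt y hvy (q_hasFDerivAt y)
    have h2 : fderiv ℝ V y = fderiv ℝ (fun z : E4 => v ⟪z, z⟫) y :=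
      Filter.EventuallyEq.fderiv_eq hy
    rw [h2, h1.fderiv, hW, smul_smul]
    simp only []
    rw [mul_comm]
  -- derivative of W at x
  have hc : HasFDerivAt (fun y : E4 => 2 * v' ⟪y, y⟫) ((4 * a) • (innerSL ℝ x : E4 →L[ℝ] ℝ)) x := by
    have h := HasDerivAt.comp_hasFDerivAt x (hv'.const_mul 2) (q_hasFDerivAt x)
    refine h.congr_fderiv ?_
    rw [smul_smul]; ring_nf
  set B : E4 →L[ℝ] (E4 →L[ℝ] ℝ) := innerSL ℝ with hBdef
  have hB : HasFDerivAt (fun y : E4 => (innerSL ℝ y : E4 →L[ℝ] ℝ)) B x := B.hasFDerivAt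
  have hWd : HasFDerivAt W ((2 * v' t₀) • B +
      (((4 * a) • (innerSL ℝ x : E4 →L[ℝ] ℝ)).smulRight (innerSL ℝ x : E4 →L[ℝ] ℝ))) x :=
    hc.smul hB
  have hffd : fderiv ℝ (fderiv ℝ V) x = (2 * v' t₀) • B +
      (((4 * a) • (innerSL ℝ x : E4 →L[ℝ] ℝ)).smulRight (innerSL ℝ x : E4 →L[ℝ] ℝ)) := by
    rw [Filter.EventuallyEq.fderiv_eq hev, hWd.fderiv]
  have happ : ∀ i : Fin 4, iteratedFDeriv ℝ 2 V x
      ![EuclideanSpace.single i (1 : ℝ), EuclideanSpace.single i (1 : ℝ)] =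
      2 * v' t₀ * ⟪(EuclideanSpace.single i (1:ℝ) : E4), (EuclideanSpace.single i (1:ℝ) : E4)⟫
        + (4 * a * ⟪x, (EuclideanSpace.single i (1:ℝ) : E4)⟫) * ⟪x, (EuclideanSpace.single i (1:ℝ) : E4)⟫ := by
    intro i
    rw [iteratedFDeriv_two_apply]
    simp only [Matrix.cons_val_zero, Matrix.cons_val_one, Matrix.head_cons, hffd]
    simp [hBdef, innerSL_apply_apply, mul_assoc]
    have h0 : (⟪(EuclideanSpace.single i (1:ℝ) : E4), (EuclideanSpace.single i (1:ℝ) : E4)⟫ : ℝ) = 1 := by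
      simp [EuclideanSpace.inner_single_right, EuclideanSpace.single_apply]
    exact (congrArg (v' t₀ * ·) ((innerSL_apply_apply (𝕜 := ℝ) _ _).trans h0)).trans (mul_one _)
  rw [lap]
  simp only [happ]
  rw [Finset.sum_add_distrib]
  have h1 : ∀ i : Fin 4, (⟪(EuclideanSpace.single i (1:ℝ) : E4), (EuclideanSpace.single i (1:ℝ) : E4)⟫ : ℝ) = 1 := by
    intro i; simp [EuclideanSpace.inner_single_right, EuclideanSpace.single_apply]
  have h2 : ∀ i : Fin 4, (⟪x, (EuclideanSpace.single i (1:ℝ) : E4)⟫ : ℝ) = x i := by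
    intro i; simp [EuclideanSpace.inner_single_right]
  simp only [h1, h2]
  have h3 : (∑ i : Fin 4, (4 * a * x i) * x i) = 4 * t₀ * a := by
    have : (t₀ : ℝ) = ∑ i, x i * x i := by
      rw [ht₀, PiLp.inner_apply]; simp [RCLike.inner_apply, pow_two]
    rw [this, Finset.mul_sum, Finset.sum_mul]
    apply Finset.sum_congr rfl; intros; ring
  rw [h3]
  simp; ring

lemma integrable_of_radial {F : ℝ → ℝ} (hF : ∀ r, 0 ≤ F r) (hFm : Measurable F)
    (hcont : AEStronglyMeasurable (fun x : E4 => F ‖x‖) volume)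
    (hint : IntegrableOn (fun r => r ^ 3 * F r) (Set.Ioi (0:ℝ))) :
    Integrable (fun x : E4 => F ‖x‖) := by
  set μ : Measure E4 := volume with hμ
  refine ⟨hcont, ?_⟩
  rw [hasFiniteIntegral_iff_ofReal (Eventually.of_forall fun x => hF _)]
  set f : ℝ → ℝ≥0∞ := fun r => ENNReal.ofReal (F r) with hf
  have hfm : Measurable f := hFm.ennreal_ofReal
  have hdim : Module.finrank ℝ E4 = 4 := by simp [finrank_euclideanSpace]
  set ν := Measure.volumeIoiPow (Module.finrank ℝ E4 - 1) with hν
  have step1 : ∫⁻ x, f ‖x‖ ∂μ = ∫⁻ x : ({0}ᶜ : Set E4), f ‖x.1‖ ∂(μ.comap (↑)) := by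
    rw [lintegral_subtype_comap (measurableSet_singleton (0:E4)).compl (fun x => f ‖x‖),
      MeasureTheory.restrict_compl_singleton]
  have step2 : ∫⁻ x : ({0}ᶜ : Set E4), f ‖x.1‖ ∂(μ.comap (↑)) =
      ∫⁻ w : Metric.sphere (0:E4) 1 × Ioi (0:ℝ), f w.2.1 ∂(μ.toSphere.prod ν) := by
    rw [← (μ.measurePreserving_homeomorphUnitSphereProd).lintegral_comp_emb
      (Homeomorph.measurableEmbedding _) (fun w => f w.2.1)]
    exact lintegral_congr fun a => by simp
  have hm2 : Measurable fun w : Metric.sphere (0:E4) 1 × Ioi (0:ℝ) => f w.2.1 :=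
    hfm.comp (measurable_subtype_coe.comp measurable_snd)
  have step3 : ∫⁻ w : Metric.sphere (0:E4) 1 × Ioi (0:ℝ), f w.2.1 ∂(μ.toSphere.prod ν) =
      μ.toSphere Set.univ * ∫⁻ r : Ioi (0:ℝ), f r.1 ∂ν := by
    rw [lintegral_prod _ hm2.aemeasurable]
    have : ∀ s : Metric.sphere (0:E4) 1, ∫⁻ r : Ioi (0:ℝ), f r.1 ∂ν = ∫⁻ r : Ioi (0:ℝ), f r.1 ∂ν :=
      fun _ => rfl
    rw [show (fun s : Metric.sphere (0:E4) 1 => ∫⁻ r : Ioi (0:ℝ), f ((s, r) : _ × _).2.1 ∂ν) =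
        (fun _ => ∫⁻ r : Ioi (0:ℝ), f r.1 ∂ν) from rfl] at *
    rw [lintegral_const, mul_comm]
  have step4 : ∫⁻ r : Ioi (0:ℝ), f r.1 ∂ν =
      ∫⁻ r in Ioi (0:ℝ), ENNReal.ofReal (r ^ 3) * f r := by
    have h3 : Module.finrank ℝ E4 - 1 = 3 := by rw [hdim]
    rw [hν, h3, Measure.volumeIoiPow]
    rw [lintegral_withDensity_eq_lintegral_mul _
      (by exact (measurable_subtype_coe.pow_const 3).ennreal_ofReal)
      (by exact hfm.comp measurable_subtype_coe)]
    rw [← lintegral_subtype_comap measurableSet_Ioi (fun r => ENNReal.ofReal (r ^ 3) * f r)]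
    rfl
  calc ∫⁻ x, f ‖x‖ ∂μ = μ.toSphere Set.univ * ∫⁻ r in Ioi (0:ℝ), ENNReal.ofReal (r ^ 3) * f r := by
        rw [step1, step2, step3, step4]
    _ < ⊤ := by
        refine ENNReal.mul_lt_top (measure_lt_top _ _) ?_
        have hb : ∫⁻ r in Ioi (0:ℝ), ENNReal.ofReal (r ^ 3) * f r
            ≤ ∫⁻ r in Ioi (0:ℝ), ‖r ^ 3 * F r‖ₑ := by
          refine setLIntegral_mono' measurableSet_Ioi fun r hr => ?_
          rw [hf, ← ENNReal.ofReal_mul (pow_nonneg (le_of_lt hr) 3)]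
          exact Real.ofReal_le_enorm _
        exact lt_of_le_of_lt hb hint.2

lemma mono_aux {f f' : ℝ → ℝ} {a : ℝ} (hd : ∀ t ∈ Ici a, HasDerivAt f (f' t) t)
    (h0 : ∀ t ∈ Ici a, 0 ≤ f' t) : MonotoneOn f (Ici a) := by
  refine monotoneOn_of_deriv_nonneg (convex_Ici a)
    (fun t ht => (hd t ht).continuousAt.continuousWithinAt)
    (fun t ht => ((hd t (interior_subset ht)).differentiableAt).differentiableWithinAt)
    (fun t ht => ?_)
  rw [(hd t (interior_subset ht)).deriv]
  exact h0 t (interior_subset ht)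

lemma anti_aux {f f' : ℝ → ℝ} {a : ℝ} (hd : ∀ t ∈ Ici a, HasDerivAt f (f' t) t)
    (h0 : ∀ t ∈ Ici a, f' t ≤ 0) : AntitoneOn f (Ici a) := by
  refine antitoneOn_of_deriv_nonpos (convex_Ici a)
    (fun t ht => (hd t ht).continuousAt.continuousWithinAt)
    (fun t ht => ((hd t (interior_subset ht)).differentiableAt).differentiableWithinAt)
    (fun t ht => ?_)
  rw [(hd t (interior_subset ht)).deriv]
  exact h0 t (interior_subset ht)

lemma quot_aux {C c t y : ℝ} (hc : 0 < c) (ht0 : 0 < t) (h1 : t^2 * y ≤ C - c * t^2)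
    (h2 : 2*|C|/c ≤ t^2) : y ≤ -(c/2) := by
  have hC : C ≤ |C| := le_abs_self C
  have h3 : 2*|C| ≤ c * t^2 := by
    rw [div_le_iff₀ hc] at h2
    linarith [h2]
  nlinarith [pow_pos ht0 2]

lemma sq_ge_aux {a t : ℝ} (ha : 0 ≤ a) (h : Real.sqrt a ≤ t) : a ≤ t^2 := by
  have h1 : Real.sqrt a ^ 2 = a := Real.sq_sqrt ha
  nlinarith [Real.sqrt_nonneg a]

set_option maxHeartbeats 2000000 in
lemma analysis_main {q2 : ℝ} (hq : 0 < q2) {g g₁ w w₁ : ℝ → ℝ}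
    (hgc : Continuous g)
    (hg1 : ∀ t ∈ Ioi (0:ℝ), HasDerivAt g (g₁ t) t)
    (hw1 : ∀ t ∈ Ioi (0:ℝ), HasDerivAt w (w₁ t) t)
    (hM : ∀ t ∈ Ioi (0:ℝ), HasDerivAt (fun s => s^2 * g₁ s) (t/4 * w t) t)
    (hJ : ∀ t ∈ Ioi (0:ℝ), HasDerivAt (fun s => s^2 * w₁ s)
      (t/4 * ((1 - t ^ q2) * Real.exp (4 * g t))) t) :
    IntegrableOn (fun t => t * ((1 + t ^ q2) * Real.exp (4 * g t))) (Ioi (0:ℝ)) := by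
  set Ef : ℝ → ℝ := fun t => Real.exp (4 * g t) with hEf
  set J : ℝ → ℝ := fun s => s^2 * w₁ s with hJdef
  set M : ℝ → ℝ := fun s => s^2 * g₁ s with hMdef
  set φ : ℝ → ℝ := fun t => t * ((1 + t ^ q2) * Ef t) with hφ
  have hEpos : ∀ t, 0 < Ef t := fun t => Real.exp_pos _
  have hrpow_cont : Continuous fun t : ℝ => t ^ q2 := by
    rw [continuous_iff_continuousAt]
    exact fun t => Real.continuousAt_rpow_const t q2 (Or.inr hq.le)
  have hφc : Continuous φ :=
    continuous_id.mul ((continuous_const.add hrpow_cont).mul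
      ((hgc.const_smul (4:ℝ)).rexp))
  have hφnn : ∀ t ∈ Ioi (0:ℝ), 0 ≤ φ t := by
    intro t ht
    have h1 : 0 ≤ t ^ q2 := Real.rpow_nonneg (le_of_lt ht) q2
    exact mul_nonneg ht.le (mul_nonneg (by linarith) (hEpos t).le)
  -- reduce to a tail estimate
  have tail_suffices : ∀ T : ℝ, 0 < T → IntegrableOn φ (Ioi T) → IntegrableOn φ (Ioi 0) := by
    intro T hT htail
    have : Ioc 0 T ∪ Ioi T = Ioi 0 := Ioc_union_Ioi_eq_Ioi hT.le
    rw [← this]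
    exact (hφc.integrableOn_Ioc).union htail
  -- J is antitone on [1, ∞)
  have hIci : ∀ a : ℝ, 0 < a → Ici a ⊆ Ioi (0:ℝ) := fun a ha t ht => lt_of_lt_of_le ha ht
  have hJanti : AntitoneOn J (Ici 1) := by
    refine anti_aux (fun t ht => hJ t (hIci 1 one_pos ht)) (fun t ht => ?_)
    have ht0 : (0:ℝ) < t := lt_of_lt_of_le one_pos ht
    have h1 : (1:ℝ) ≤ t ^ q2 := Real.one_le_rpow ht hq.le
    have hE := (hEpos t).le
    have : (1 - t ^ q2) * Ef t ≤ 0 := mul_nonpos_of_nonpos_of_nonneg (by linarith) hE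
    have ht4 : 0 ≤ t / 4 := by linarith
    exact mul_nonpos_of_nonneg_of_nonpos ht4 this
  have hTwo : ∀ t : ℝ, (2:ℝ) ^ q2⁻¹ ≤ t → (2:ℝ) ≤ t ^ q2 := by
    intro t ht
    have h2 : (2:ℝ) = ((2:ℝ) ^ q2⁻¹) ^ q2 := by
      rw [← Real.rpow_mul (by norm_num), inv_mul_cancel₀ hq.ne', Real.rpow_one]
    rw [h2]
    exact Real.rpow_le_rpow (Real.rpow_nonneg (by norm_num) _) ht hq.le
  by_cases hcase : ∀ t ∈ Ioi (1:ℝ), 0 ≤ J t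
  · -- Case B : J stays nonnegative, hence the "curvature integral" converges
    have hJ2anti : Antitone (fun t => J (max t 2)) := by
      intro s t hst
      exact hJanti (Set.mem_Ici.2 (le_max_of_le_right one_le_two)) (Set.mem_Ici.2 (le_max_of_le_right one_le_two))
        (max_le_max hst le_rfl)
    have hbdd : BddBelow (range fun t => J (max t 2)) := by
      refine ⟨0, ?_⟩
      rintro y ⟨t, rfl⟩
      exact hcase _ (Set.mem_Ioi.2 (lt_of_lt_of_le one_lt_two (le_max_right _ _)))
    have hTend2 : Tendsto (fun t => J (max t 2)) atTop (𝓝 (⨅ t, J (max t 2))) :=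
      tendsto_atTop_ciInf hJ2anti hbdd
    have hTendJ : Tendsto J atTop (𝓝 (⨅ t, J (max t 2))) := by
      refine hTend2.congr' ?_
      filter_upwards [eventually_ge_atTop (2:ℝ)] with t ht
      rw [max_eq_left ht]
    have hIntD : IntegrableOn (fun t => t/4 * ((t ^ q2 - 1) * Ef t)) (Ioi 1) := by
      refine integrableOn_Ioi_deriv_of_nonneg
        (((hJ 1 (by norm_num)).continuousAt.neg).continuousWithinAt)
        (fun x hx => ?_) (fun x hx => ?_) hTendJ.neg
      · have h := (hJ x (Set.mem_Ioi.2 (lt_trans one_pos (Set.mem_Ioi.1 hx)))).neg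
        refine h.congr_deriv ?_
        ring
      · have hx0 : (0:ℝ) < x := lt_trans one_pos hx
        have h1 : (1:ℝ) ≤ x ^ q2 := Real.one_le_rpow (le_of_lt hx) hq.le
        exact mul_nonneg (by linarith) (mul_nonneg (by linarith) (hEpos x).le)
    set T : ℝ := max 2 ((2:ℝ) ^ q2⁻¹) with hTdef
    have hT0 : (0:ℝ) < T := lt_of_lt_of_le two_pos (le_max_left _ _)
    have hT1 : (1:ℝ) ≤ T := le_trans one_le_two (le_max_left _ _)
    have hT2 : ∀ t, T ≤ t → (2:ℝ) ≤ t ^ q2 :=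
      fun t ht => hTwo t (le_trans (le_max_right _ _) ht)
    have hbound : IntegrableOn (fun t => 16 * (t/4 * ((t ^ q2 - 1) * Ef t))) (Ioi T) :=
      (hIntD.mono_set (Ioi_subset_Ioi hT1)).const_mul 16
    have hφT : IntegrableOn φ (Ioi T) := by
      refine Integrable.mono' hbound (hφc.aestronglyMeasurable.restrict) ?_
      refine (ae_restrict_iff' measurableSet_Ioi).2 (Eventually.of_forall fun t ht => ?_)
      have ht0 : (0:ℝ) < t := lt_of_lt_of_le hT0 (le_of_lt ht)
      rw [Real.norm_eq_abs, abs_of_nonneg (hφnn t ht0)]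
      have key : (1 + t ^ q2) ≤ 4 * (t ^ q2 - 1) := by linarith [hT2 t (le_of_lt ht)]
      show t * ((1 + t ^ q2) * Ef t) ≤ 16 * (t/4 * ((t ^ q2 - 1) * Ef t))
      nlinarith [mul_nonneg (mul_nonneg ht0.le (hEpos t).le) (sub_nonneg.2 key)]
    exact tail_suffices T hT0 hφT
  · -- Case A : J becomes negative
    push_neg at hcase
    obtain ⟨t₀, ht₀mem, hJt₀⟩ := hcase
    have ht₀1 : (1:ℝ) ≤ t₀ := le_of_lt ht₀mem
    have ht₀0 : (0:ℝ) < t₀ := lt_trans one_pos ht₀mem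
    have hJle : ∀ t ∈ Ici t₀, J t ≤ J t₀ :=
      fun t ht => hJanti ht₀1 (le_trans ht₀1 ht) ht
    have hw1neg : ∀ t ∈ Ici t₀, w₁ t < 0 := by
      intro t ht
      have ht0 : (0:ℝ) < t := lt_of_lt_of_le ht₀0 ht
      have h1 : t^2 * w₁ t ≤ J t₀ := hJle t ht
      nlinarith [pow_pos ht0 2]
    have hwanti : AntitoneOn w (Ici t₀) :=
      anti_aux (fun t ht => hw1 t (lt_of_lt_of_le ht₀0 ht)) (fun t ht => (hw1neg t ht).le)
    by_cases hcase2 : ∀ t ∈ Ici t₀, 0 ≤ w t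
    · -- Case A2 : impossible
      exfalso
      have hMmono : MonotoneOn M (Ici t₀) := by
        refine mono_aux (fun t ht => hM t (lt_of_lt_of_le ht₀0 ht)) (fun t ht => ?_)
        have ht0 : (0:ℝ) < t := lt_of_lt_of_le ht₀0 ht
        exact mul_nonneg (by linarith) (hcase2 t ht)
      set C : ℝ := M t₀ with hC
      have hHmono : MonotoneOn (fun t => g t + C * t⁻¹) (Ici t₀) := by
        refine mono_aux (f' := fun t => g₁ t + C * (-(t^2)⁻¹)) (fun t ht => ?_) (fun t ht => ?_)
        · have ht0 : (0:ℝ) < t := lt_of_lt_of_le ht₀0 ht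
          exact (hg1 t ht0).add ((hasDerivAt_inv (ne_of_gt ht0)).const_mul C)
        · have ht0 : (0:ℝ) < t := lt_of_lt_of_le ht₀0 ht
          have hM' : C ≤ t^2 * g₁ t := hMmono self_mem_Ici ht ht
          have ht2 : (0:ℝ) < t^2 := pow_pos ht0 2
          have hipos : (0:ℝ) < (t^2)⁻¹ := inv_pos.2 ht2
          have key : 0 ≤ (t^2 * g₁ t - C) * (t^2)⁻¹ :=
            mul_nonneg (by linarith) hipos.le
          have expand : (t^2 * g₁ t - C) * (t^2)⁻¹ = g₁ t - C * (t^2)⁻¹ := by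
            field_simp
          rw [expand] at key
          simp only [mul_neg]
          linarith
      -- g bounded below, hence Ef bounded below
      set m : ℝ := g t₀ + C * t₀⁻¹ - |C| * t₀⁻¹ with hm
      have hglow : ∀ t ∈ Ici t₀, m ≤ g t := by
        intro t ht
        have ht0 : (0:ℝ) < t := lt_of_lt_of_le ht₀0 ht
        have h1 : g t₀ + C * t₀⁻¹ ≤ g t + C * t⁻¹ := hHmono self_mem_Ici ht ht
        have h2 : C * t⁻¹ ≤ |C| * t₀⁻¹ := by
          rcases le_or_gt 0 C with hC0 | hC0
          · have hi : t⁻¹ ≤ t₀⁻¹ := inv_anti₀ ht₀0 ht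
            exact le_trans (mul_le_mul_of_nonneg_left hi hC0)
              (mul_le_mul_of_nonneg_right (le_abs_self C) (inv_nonneg.2 ht₀0.le))
          · have : C * t⁻¹ ≤ 0 := mul_nonpos_of_nonpos_of_nonneg hC0.le (inv_nonneg.2 ht0.le)
            exact le_trans this (mul_nonneg (abs_nonneg C) (inv_nonneg.2 ht₀0.le))
        rw [hm]
        linarith
      set ε : ℝ := Real.exp (4 * m) with hε
      have hεpos : 0 < ε := Real.exp_pos _
      have hElow : ∀ t ∈ Ici t₀, ε ≤ Ef t := by
        intro t ht
        exact Real.exp_le_exp.2 (by linarith [hglow t ht])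
      set T₁ : ℝ := max t₀ ((2:ℝ) ^ q2⁻¹) with hT₁
      have hT₁t₀ : t₀ ≤ T₁ := le_max_left _ _
      have hT₁0 : (0:ℝ) < T₁ := lt_of_lt_of_le ht₀0 hT₁t₀
      have hJ'le : ∀ t ∈ Ici T₁, t/4 * ((1 - t ^ q2) * Ef t) ≤ -(ε/8) * (t ^ (1+q2)) := by
        intro t ht
        have ht0 : (0:ℝ) < t := lt_of_lt_of_le hT₁0 ht
        have hs2 : (2:ℝ) ≤ t ^ q2 := hTwo t (le_trans (le_max_right _ _) ht)
        have hEl : ε ≤ Ef t := hElow t (le_trans hT₁t₀ ht)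
        have hsum : t ^ (1+q2) = t * t ^ q2 := by
          rw [Real.rpow_add ht0, Real.rpow_one]
        have h1 : (1 - t ^ q2) * Ef t ≤ (1 - t ^ q2) * ε :=
          mul_le_mul_of_nonpos_left hEl (by linarith)
        have h2 : t/4 * ((1 - t ^ q2) * Ef t) ≤ t/4 * ((1 - t ^ q2) * ε) :=
          mul_le_mul_of_nonneg_left h1 (by linarith)
        refine le_trans h2 ?_
        rw [hsum]
        nlinarith [mul_nonneg (mul_nonneg ht0.le hεpos.le) (by linarith : (0:ℝ) ≤ t ^ q2 - 2)]
      -- so J decays quadratically, w₁ becomes ≤ -c/2, w → -∞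
      have h2q : (0:ℝ) < 2 + q2 := by linarith
      set c2 : ℝ := ε/8 * (2+q2)⁻¹ with hc2
      have hc2pos : 0 < c2 := by positivity
      set P : ℝ → ℝ := fun t => J t + c2 * t ^ ((2:ℝ)+q2) with hP
      have hPanti : AntitoneOn P (Ici T₁) := by
        refine anti_aux (f' := fun t => t/4 * ((1 - t ^ q2) * Ef t) + (ε/8) * t ^ (1+q2))
          (fun t ht => ?_) (fun t ht => by linarith [hJ'le t ht])
        have ht0 : (0:ℝ) < t := lt_of_lt_of_le hT₁0 ht
        have hpow : HasDerivAt (fun s : ℝ => s ^ ((2:ℝ)+q2)) ((2+q2) * t ^ ((2:ℝ)+q2-1)) t :=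
          Real.hasDerivAt_rpow_const (Or.inl (ne_of_gt ht0))
        have h := (hJ t ht0).add ((hpow.const_mul c2))
        refine h.congr_deriv ?_
        rw [show (2:ℝ)+q2-1 = 1+q2 by ring, hc2]
        field_simp
        ring
      set C₄ : ℝ := P T₁ with hC₄
      have hJup : ∀ t, max T₁ 1 ≤ t → J t ≤ C₄ - c2 * t^2 := by
        intro t ht
        have ht1 : (1:ℝ) ≤ t := le_trans (le_max_right _ _) ht
        have htT : T₁ ≤ t := le_trans (le_max_left _ _) ht
        have hPt : P t ≤ C₄ := hPanti self_mem_Ici htT htT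
        have hge : (t:ℝ)^(2:ℕ) ≤ t ^ ((2:ℝ)+q2) := by
          rw [show ((t:ℝ)^(2:ℕ) : ℝ) = t ^ ((2:ℕ):ℝ) by rw [Real.rpow_natCast]]
          exact Real.rpow_le_rpow_of_exponent_le ht1 (by push_cast; linarith)
        have := mul_le_mul_of_nonneg_left hge hc2pos.le
        have hPt' : J t + c2 * t ^ ((2:ℝ)+q2) ≤ C₄ := hPt
        linarith
      set T₂ : ℝ := max (max T₁ 1) (Real.sqrt (2*|C₄|/c2)) with hT₂
      have hw₁up : ∀ t, T₂ ≤ t → w₁ t ≤ -(c2/2) := by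
        intro t ht
        have ht0 : (0:ℝ) < t := lt_of_lt_of_le one_pos (le_trans (le_trans (le_max_right _ _) (le_max_left _ _)) ht)
        refine quot_aux hc2pos ht0 (hJup t (le_trans (le_max_left _ _) ht)) ?_
        exact sq_ge_aux (by positivity) (le_trans (le_max_right _ _) ht)
      -- w decreases linearly: contradiction with hcase2
      have hQanti : AntitoneOn (fun t => w t + (c2/2) * t) (Ici T₂) := by
        refine anti_aux (f' := fun t => w₁ t + (c2/2))
          (fun t ht => ?_) (fun t ht => by linarith [hw₁up t ht])
        have ht0 : (0:ℝ) < t := lt_of_lt_of_le one_pos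
          (le_trans (le_trans (le_max_right T₁ 1) (le_max_left _ _)) ht)
        have h := (hw1 t ht0).add ((hasDerivAt_id t).const_mul (c2/2))
        refine h.congr_deriv ?_
        ring
      set t₃ : ℝ := T₂ + (2/c2) * |w T₂ + 1| with ht₃
      have ht₃ge : T₂ ≤ t₃ := by
        have h0 : 0 ≤ (2/c2) * |w T₂ + 1| := mul_nonneg (by positivity) (abs_nonneg _)
        rw [ht₃]
        linarith
      have hw3 : w t₃ + (c2/2) * t₃ ≤ w T₂ + (c2/2) * T₂ :=
        hQanti self_mem_Ici ht₃ge ht₃ge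
      have habs : w T₂ + 1 ≤ |w T₂ + 1| := le_abs_self _
      have hmul : (c2/2) * ((2/c2) * |w T₂ + 1|) = |w T₂ + 1| := by
        field_simp
      have hw3' : w t₃ ≤ -1 := by
        have : (c2/2) * t₃ = (c2/2) * T₂ + |w T₂ + 1| := by
          rw [ht₃]; field_simp
        nlinarith [hw3, habs]
      have hT₂t₀ : t₀ ≤ T₂ :=
        le_trans hT₁t₀ (le_trans (le_max_left _ _) (le_max_left _ _))
      linarith [hcase2 t₃ (le_trans hT₂t₀ ht₃ge)]
    · -- Case A1 : w becomes negative, so u decays quadratically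
      push_neg at hcase2
      obtain ⟨t₁, ht₁mem, hwt₁⟩ := hcase2
      set δ : ℝ := -w t₁ with hδ
      have hδpos : 0 < δ := by rw [hδ]; linarith
      have ht₁0 : (0:ℝ) < t₁ := lt_of_lt_of_le ht₀0 ht₁mem
      have hwle : ∀ t ∈ Ici t₁, w t ≤ -δ := by
        intro t ht
        have := hwanti ht₁mem (Set.mem_Ici.2 (le_trans (Set.mem_Ici.1 ht₁mem) (Set.mem_Ici.1 ht))) ht
        rw [hδ]; linarith
      have hK₂anti : AntitoneOn (fun t => M t + (δ/8) * t^2) (Ici t₁) := by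
        refine anti_aux (f' := fun t => t/4 * w t + (δ/4) * t) (fun t ht => ?_) (fun t ht => ?_)
        · have ht0 : (0:ℝ) < t := lt_of_lt_of_le ht₁0 ht
          have h := (hM t ht0).add ((hasDerivAt_pow 2 t).const_mul (δ/8))
          refine h.congr_deriv ?_
          push_cast
          ring
        · have ht0 : (0:ℝ) < t := lt_of_lt_of_le ht₁0 ht
          have h1 : w t ≤ -δ := hwle t ht
          nlinarith [mul_nonneg ht0.le (by linarith : (0:ℝ) ≤ -δ - w t)]
      set C₅ : ℝ := M t₁ + (δ/8) * t₁^2 with hC₅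
      have hMup : ∀ t, t₁ ≤ t → M t ≤ C₅ - (δ/8)*t^2 := by
        intro t ht
        have := hK₂anti self_mem_Ici ht ht
        rw [hC₅]
        linarith
      set T₃ : ℝ := max t₁ (Real.sqrt (2*|C₅|/(δ/8))) with hT₃
      have hT₃0 : (0:ℝ) < T₃ := lt_of_lt_of_le ht₁0 (le_max_left _ _)
      have hg₁up : ∀ t, T₃ ≤ t → g₁ t ≤ -(δ/16) := by
        intro t ht
        have ht0 : (0:ℝ) < t := lt_of_lt_of_le hT₃0 ht
        have h := quot_aux (show (0:ℝ) < δ/8 by linarith) ht0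
          (hMup t (le_trans (le_max_left _ _) ht))
          (sq_ge_aux (by positivity) (le_trans (le_max_right _ _) ht))
        have heq : -((δ/8)/2) = -(δ/16) := by ring
        rwa [heq] at h
      have hK₃anti : AntitoneOn (fun t => g t + (δ/16)*t) (Ici T₃) := by
        refine anti_aux (f' := fun t => g₁ t + (δ/16))
          (fun t ht => ?_) (fun t ht => by linarith [hg₁up t ht])
        have ht0 : (0:ℝ) < t := lt_of_lt_of_le hT₃0 ht
        have h := (hg1 t ht0).add ((hasDerivAt_id t).const_mul (δ/16))
        refine h.congr_deriv ?_
        ring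
      set C₆ : ℝ := g T₃ + (δ/16)*T₃ with hC₆
      have hgup : ∀ t, T₃ ≤ t → g t ≤ C₆ - (δ/16)*t := by
        intro t ht
        have := hK₃anti self_mem_Ici ht ht
        rw [hC₆]
        linarith
      have hEup : ∀ t, T₃ ≤ t → Ef t ≤ Real.exp (4*C₆) * Real.exp (-(δ/4)*t) := by
        intro t ht
        rw [← Real.exp_add]
        exact Real.exp_le_exp.2 (by have := hgup t ht; linarith)
      have hdec := tendsto_rpow_mul_exp_neg_mul_atTop_nhds_zero (1+q2) (δ/8) (by linarith)
      have hev : ∀ᶠ t in atTop, t ^ (1+q2) * Real.exp (-(δ/8)*t) ≤ 1 :=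
        hdec.eventually_le_const one_pos
      obtain ⟨T₄, hT₄⟩ := eventually_atTop.1 hev
      set T₅ : ℝ := max (max T₃ T₄) 1 with hT₅
      have hT₅pos : (0:ℝ) < T₅ := lt_of_lt_of_le one_pos (le_max_right _ _)
      have hφle : ∀ t, T₅ ≤ t → φ t ≤ (2*Real.exp (4*C₆)) * Real.exp (-(δ/8)*t) := by
        intro t ht
        have ht1 : (1:ℝ) ≤ t := le_trans (le_max_right _ _) ht
        have ht0 : (0:ℝ) < t := lt_of_lt_of_le one_pos ht1
        have hT₃t : T₃ ≤ t := le_trans (le_trans (le_max_left _ _) (le_max_left _ _)) ht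
        have hT₄t : T₄ ≤ t := le_trans (le_trans (le_max_right _ _) (le_max_left _ _)) ht
        have hE := hEup t hT₃t
        have hq1 : (1:ℝ) ≤ t^q2 := Real.one_le_rpow ht1 hq.le
        have hpoly : t * (1 + t^q2) ≤ 2 * t^(1+q2) := by
          have hsum : t^(1+q2) = t * t^q2 := by rw [Real.rpow_add ht0, Real.rpow_one]
          nlinarith
        have hexp : Real.exp (-(δ/4)*t) = Real.exp (-(δ/8)*t) * Real.exp (-(δ/8)*t) := by
          rw [← Real.exp_add]
          congr 1
          ring
        have hb := hT₄ t hT₄t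
        show t * ((1 + t ^ q2) * Ef t) ≤ _
        calc t * ((1 + t^q2) * Ef t) = (t * (1+t^q2)) * Ef t := by ring
          _ ≤ (t * (1+t^q2)) * (Real.exp (4*C₆) * Real.exp (-(δ/4)*t)) :=
              mul_le_mul_of_nonneg_left hE (by nlinarith)
          _ ≤ (2*t^(1+q2)) * (Real.exp (4*C₆) * Real.exp (-(δ/4)*t)) :=
              mul_le_mul_of_nonneg_right hpoly (by positivity)
          _ = (2*Real.exp (4*C₆)) * ((t^(1+q2) * Real.exp (-(δ/8)*t)) * Real.exp (-(δ/8)*t)) := by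
              rw [hexp]; ring
          _ ≤ (2*Real.exp (4*C₆)) * (1 * Real.exp (-(δ/8)*t)) := by
              refine mul_le_mul_of_nonneg_left
                (mul_le_mul_of_nonneg_right hb (Real.exp_nonneg _)) (by positivity)
          _ = (2*Real.exp (4*C₆)) * Real.exp (-(δ/8)*t) := by ring
      have hφT₅ : IntegrableOn φ (Ioi T₅) := by
        refine Integrable.mono'
          ((exp_neg_integrableOn_Ioi T₅ (show (0:ℝ) < δ/8 by linarith)).const_mul
            (2*Real.exp (4*C₆)))
          (hφc.aestronglyMeasurable.restrict) ?_
        refine (ae_restrict_iff' measurableSet_Ioi).2 (Eventually.of_forall fun t ht => ?_)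
        have ht0 : (0:ℝ) < t := lt_of_lt_of_le hT₅pos (le_of_lt ht)
        rw [Real.norm_eq_abs, abs_of_nonneg (hφnn t ht0)]
        exact hφle t (le_of_lt ht)
      exact tail_suffices T₅ hT₅pos hφT₅


set_option maxHeartbeats 2000000 in
theorem stmt16 (p : ℝ) (hp : 0 < p) (u : E4 → ℝ)
    (hu : ContDiff ℝ 4 u) (hrad : Radial u)
    (heq : ∀ x : E4, lap (lap u) x = (1 - ‖x‖ ^ p) * Real.exp (4 * u x)) :
    Integrable (fun x : E4 => (1 + ‖x‖ ^ p) * Real.exp (4 * u x)) := by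
  classical
  set q2 : ℝ := p / 2 with hq2def
  have hq2 : 0 < q2 := by rw [hq2def]; linarith
  set e₀ : E4 := EuclideanSpace.single 0 1 with he₀def
  have he₀ : ‖e₀‖ = 1 := by
    rw [he₀def, EuclideanSpace.norm_single]
    norm_num
  have hnorm_smul : ∀ c : ℝ, 0 ≤ c → ‖c • e₀‖ = c := by
    intro c hc
    rw [norm_smul, he₀, Real.norm_eq_abs, abs_of_nonneg hc, mul_one]
  set g : ℝ → ℝ := fun t => u (Real.sqrt t • e₀) with hgdef
  have hgu : ∀ x : E4, u x = g (⟪x, x⟫ : ℝ) := by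
    intro x
    have h1 : (⟪x, x⟫ : ℝ) = ‖x‖ * ‖x‖ := real_inner_self_eq_norm_mul_norm x
    have h2 : Real.sqrt (⟪x, x⟫ : ℝ) = ‖x‖ := by
      rw [h1, Real.sqrt_mul_self (norm_nonneg x)]
    refine hrad x _ ?_
    rw [h2, hnorm_smul ‖x‖ (norm_nonneg x)]
  have hgc : Continuous g :=
    hu.continuous.comp (Real.continuous_sqrt.smul continuous_const)
  have hg4 : ContDiffOn ℝ 4 g (Ioi 0) := by
    intro t ht
    refine ContDiffAt.contDiffWithinAt ?_
    exact hu.contDiffAt.comp t ((Real.contDiffAt_sqrt (ne_of_gt ht)).smul contDiffAt_const)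
  -- derivatives of g
  set g₁ : ℝ → ℝ := deriv g with hg₁def
  set g₂ : ℝ → ℝ := deriv g₁ with hg₂def
  have hg1 : ∀ t ∈ Ioi (0:ℝ), HasDerivAt g (g₁ t) t := by
    intro t ht
    exact ((hg4.differentiableOn (by norm_num) t ht).differentiableAt
      (isOpen_Ioi.mem_nhds ht)).hasDerivAt
  have hg1c : ContDiffOn ℝ 3 g₁ (Ioi 0) := hg4.deriv_of_isOpen isOpen_Ioi (by norm_num)
  have hg2 : ∀ t ∈ Ioi (0:ℝ), HasDerivAt g₁ (g₂ t) t := by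
    intro t ht
    exact ((hg1c.differentiableOn (by norm_num) t ht).differentiableAt
      (isOpen_Ioi.mem_nhds ht)).hasDerivAt
  have hg2c : ContDiffOn ℝ 2 g₂ (Ioi 0) := hg1c.deriv_of_isOpen isOpen_Ioi (by norm_num)
  -- the radial Laplacian of u
  set w : ℝ → ℝ := fun t => 4 * t * g₂ t + 8 * g₁ t with hwdef
  have hwc2 : ContDiffOn ℝ 2 w (Ioi 0) :=
    ((contDiffOn_const.mul contDiffOn_id).mul hg2c).add
      (contDiffOn_const.mul (hg1c.of_le (by norm_num)))
  set w₁ : ℝ → ℝ := deriv w with hw₁def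
  set w₂ : ℝ → ℝ := deriv w₁ with hw₂def
  have hw1 : ∀ t ∈ Ioi (0:ℝ), HasDerivAt w (w₁ t) t := by
    intro t ht
    exact ((hwc2.differentiableOn (by norm_num) t ht).differentiableAt
      (isOpen_Ioi.mem_nhds ht)).hasDerivAt
  have hw1c : ContDiffOn ℝ 1 w₁ (Ioi 0) := hwc2.deriv_of_isOpen isOpen_Ioi (by norm_num)
  have hw2 : ∀ t ∈ Ioi (0:ℝ), HasDerivAt w₁ (w₂ t) t := by
    intro t ht
    exact ((hw1c.differentiableOn (by norm_num) t ht).differentiableAt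
      (isOpen_Ioi.mem_nhds ht)).hasDerivAt
  have hlapu : ∀ x : E4, x ≠ 0 → lap u x = w (⟪x, x⟫ : ℝ) := by
    intro x hx
    have hip : (0:ℝ) < ⟪x, x⟫ := by
      rw [real_inner_self_eq_norm_mul_norm]
      exact mul_pos (norm_pos_iff.2 hx) (norm_pos_iff.2 hx)
    have h := lap_radial g g₁ (g₂ (⟪x, x⟫ : ℝ)) u x
      (Eventually.of_forall hgu)
      (Filter.eventually_of_mem (isOpen_Ioi.mem_nhds hip) hg1)
      (hg2 _ hip)
    rw [h, hwdef]
  -- the equation in radial form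
  have hODE : ∀ t ∈ Ioi (0:ℝ), 4 * t * w₂ t + 8 * w₁ t = (1 - t ^ q2) * Real.exp (4 * g t) := by
    intro t ht
    have ht0 : (0:ℝ) < t := ht
    set x : E4 := Real.sqrt t • e₀ with hxdef
    have hnx : ‖x‖ = Real.sqrt t := hnorm_smul _ (Real.sqrt_nonneg t)
    have hx0 : x ≠ 0 := by
      rw [← norm_pos_iff, hnx]
      exact Real.sqrt_pos.2 ht0
    have hipx : (⟪x, x⟫ : ℝ) = t := by
      rw [real_inner_self_eq_norm_mul_norm, hnx, Real.mul_self_sqrt ht0.le]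
    have hV : ∀ᶠ y in nhds x, lap u y = w (⟪y, y⟫ : ℝ) := by
      filter_upwards [isOpen_compl_singleton.mem_nhds (by simpa using hx0 :
        x ∈ ({0}ᶜ : Set E4))] with y hy
      exact hlapu y hy
    have h := lap_radial w w₁ (w₂ (⟪x, x⟫ : ℝ)) (lap u) x hV
      (by rw [hipx]; exact Filter.eventually_of_mem (isOpen_Ioi.mem_nhds ht0) hw1)
      (by rw [hipx]; exact hw2 t ht0)
    rw [heq x, hipx] at h
    have hxp : ‖x‖ ^ p = t ^ q2 := by
      rw [hnx, Real.sqrt_eq_rpow, ← Real.rpow_mul ht0.le, hq2def]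
      congr 1
      ring
    rw [hxp, hgu x, hipx] at h
    linarith [h]
  -- derivative identities for the 1-D analysis
  have hM : ∀ t ∈ Ioi (0:ℝ), HasDerivAt (fun s => s^2 * g₁ s) (t/4 * w t) t := by
    intro t ht
    have h := (hasDerivAt_pow 2 t).mul (hg2 t ht)
    refine h.congr_deriv ?_
    rw [hwdef]
    push_cast
    ring
  have hJ : ∀ t ∈ Ioi (0:ℝ), HasDerivAt (fun s => s^2 * w₁ s)
      (t/4 * ((1 - t ^ q2) * Real.exp (4 * g t))) t := by
    intro t ht
    have h := (hasDerivAt_pow 2 t).mul (hw2 t ht)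
    refine h.congr_deriv ?_
    have hode := hODE t ht
    push_cast
    linear_combination (t/4) * hode
  -- the 1-D integrability
  have hIntT : IntegrableOn (fun t => t * ((1 + t ^ q2) * Real.exp (4 * g t))) (Ioi (0:ℝ)) :=
    analysis_main hq2 hgc hg1 hw1 hM hJ
  -- substitute t = r²
  set F : ℝ → ℝ := fun r => (1 + (r*r) ^ q2) * Real.exp (4 * g (r*r)) with hFdef
  have h1d : IntegrableOn (fun r => r ^ 3 * F r) (Ioi (0:ℝ)) := by
    have hsub := (integrableOn_Ioi_comp_rpow_iff'
      (fun t => t * ((1 + t ^ q2) * Real.exp (4 * g t))) (p := 2) two_ne_zero).2 hIntT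
    refine hsub.congr_fun (fun r hr => ?_) measurableSet_Ioi
    have hr0 : (0:ℝ) < r := hr
    have h2 : r ^ (2:ℝ) = r * r := by
      rw [Real.rpow_two]
      ring
    have h1 : r ^ ((2:ℝ) - 1) = r := by
      norm_num
    beta_reduce
    rw [smul_eq_mul, h1, h2, hFdef]
    ring
  have hFc : Continuous F := by
    have hsq : Continuous fun r : ℝ => r * r := continuous_id.mul continuous_id
    have hrpow : Continuous fun t : ℝ => t ^ q2 := by
      rw [continuous_iff_continuousAt]
      exact fun t => Real.continuousAt_rpow_const t q2 (Or.inr hq2.le)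
    exact ((continuous_const.add (hrpow.comp hsq)).mul
      ((hgc.comp hsq).const_smul (4:ℝ)).rexp)
  have hFnn : ∀ r, 0 ≤ F r := by
    intro r
    have h1 : 0 ≤ (r*r) ^ q2 := Real.rpow_nonneg (mul_self_nonneg r) q2
    have h2 : 0 < Real.exp (4 * g (r*r)) := Real.exp_pos _
    rw [hFdef]
    exact mul_nonneg (by linarith) h2.le
  have hkey : (fun x : E4 => (1 + ‖x‖ ^ p) * Real.exp (4 * u x)) = fun x => F ‖x‖ := by
    funext x
    have h1 : (‖x‖ * ‖x‖ : ℝ) ^ q2 = ‖x‖ ^ p := by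
      have h2 : (‖x‖ : ℝ) * ‖x‖ = ‖x‖ ^ (2:ℝ) := by rw [Real.rpow_two]; ring
      rw [h2, ← Real.rpow_mul (norm_nonneg x), hq2def]
      congr 1
      ring
    have h3 : g (‖x‖ * ‖x‖) = u x := by
      rw [← real_inner_self_eq_norm_mul_norm, ← hgu]
    rw [hFdef]
    simp only []
    rw [h1, h3]
  rw [hkey]
  exact integrable_of_radial hFnn hFc.measurable
    ((hFc.comp continuous_norm).aestronglyMeasurable) h1d

end
end

section
/- Fix p > 0 and let u be a normal solution of Δ²u = (1+|x|^p)e^{4u} on ℝ⁴ with total curvature Λ > 0. Then there exist C ∈ ℝ and R ≥ 1 such that u(x) ≥ −(Λ/(8π²))·log|x| − C for all |x| ≥ R, and consequently Λ > (4+p)·2π². -/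
open MeasureTheory Real Filter Asymptotics

noncomputable section

open Set Metric ENNReal in
/-- The function `y ↦ -min (log ‖y‖) 0` (i.e. `log⁻ ‖y‖`) is integrable on `ℝ⁴`. -/
lemma intlog19 : Integrable (fun y : E4 => -min (Real.log ‖y‖) 0) := by
  have hnn : ∀ y : E4, 0 ≤ -min (Real.log ‖y‖) 0 := fun y => by
    simp [min_le_right]
  have hm : Measurable fun y : E4 => -min (Real.log ‖y‖) 0 :=
    ((Real.measurable_log.comp measurable_norm).min measurable_const).neg
  refine ⟨hm.aestronglyMeasurable, ?_⟩
  rw [hasFiniteIntegral_iff_norm]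
  have h1 : ∀ y : E4, ENNReal.ofReal ‖-min (Real.log ‖y‖) 0‖
      = ENNReal.ofReal (-min (Real.log ‖y‖) 0) := fun y => by
    rw [Real.norm_eq_abs, abs_of_nonneg (hnn y)]
  simp_rw [h1]
  rw [lintegral_eq_lintegral_meas_lt _ (Eventually.of_forall hnn) hm.aemeasurable]
  have hsub : ∀ t : ℝ, 0 < t →
      {a : E4 | t < -min (Real.log ‖a‖) 0} ⊆ closedBall 0 (Real.exp (-t)) := by
    intro t ht a ha
    simp only [mem_setOf_eq] at ha
    have h2 : Real.log ‖a‖ < -t := by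
      rcases min_cases (Real.log ‖a‖) 0 with ⟨h, _⟩ | ⟨h, _⟩ <;> rw [h] at ha <;> linarith
    rcases eq_or_lt_of_le (norm_nonneg a) with h0 | h0
    · simp [mem_closedBall, dist_zero_right, ← h0, (Real.exp_pos _).le]
    · have := (Real.log_lt_iff_lt_exp h0).mp h2
      simpa [mem_closedBall, dist_zero_right] using this.le
  calc ∫⁻ t in Ioi (0:ℝ), volume {a : E4 | t < -min (Real.log ‖a‖) 0}
      ≤ ∫⁻ t in Ioi (0:ℝ), ENNReal.ofReal (Real.exp (-(4*t))) * volume (ball (0:E4) 1) := by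
        refine setLIntegral_mono' measurableSet_Ioi fun t ht => ?_
        refine le_trans (measure_mono (hsub t ht)) ?_
        rw [Measure.addHaar_closedBall _ _ (Real.exp_pos _).le, finrank_euclideanSpace_fin]
        gcongr
        rw [← Real.exp_nat_mul]
        norm_num [mul_comm]
    _ < ∞ := by
        rw [lintegral_mul_const' _ _ measure_ball_lt_top.ne]
        refine ENNReal.mul_lt_top ?_ measure_ball_lt_top
        have : IntegrableOn (fun t : ℝ => Real.exp (-(4*t))) (Ioi 0) := by
          simpa using exp_neg_integrableOn_Ioi 0 (by norm_num : (0:ℝ) < 4)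
        have h3 := this.hasFiniteIntegral
        rw [hasFiniteIntegral_iff_norm] at h3
        refine lt_of_le_of_lt (le_of_eq ?_) h3
        refine lintegral_congr fun t => ?_
        rw [Real.norm_eq_abs, abs_of_nonneg (Real.exp_pos _).le]

/-- Key pointwise inequality for the lower bound. -/
lemma key19 (x y : E4) (hx : 1 ≤ ‖x‖) :
    -Real.log 2 + min (Real.log ‖y‖) 0 ≤ Real.log ‖x‖ + Real.log (‖y‖ / ‖x - y‖) := by
  have ha : (0:ℝ) < ‖x‖ := lt_of_lt_of_le one_pos hx
  have hla : 0 ≤ Real.log ‖x‖ := Real.log_nonneg hx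
  have hl2 : 0 < Real.log 2 := Real.log_pos one_lt_two
  have hmin : min (Real.log ‖y‖) 0 ≤ 0 := min_le_right _ _
  rcases eq_or_lt_of_le (norm_nonneg y) with hb0 | hb0
  · rw [← hb0, Real.log_zero, zero_div, Real.log_zero, min_self]
    linarith
  rcases eq_or_lt_of_le (norm_nonneg (x - y)) with hd0 | hd0
  · rw [show ‖y‖ / ‖x - y‖ = 0 by rw [← hd0]; exact div_zero _, Real.log_zero]
    linarith
  have hd : ‖x - y‖ ≤ ‖x‖ + ‖y‖ := norm_sub_le x y
  rw [Real.log_div hb0.ne' hd0.ne']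
  rcases le_or_gt 1 ‖y‖ with hb1 | hb1
  · have hmin0 : min (Real.log ‖y‖) 0 = 0 := min_eq_right (Real.log_nonneg hb1)
    have h2 : ‖x - y‖ ≤ 2 * ‖x‖ * ‖y‖ := by nlinarith
    have h3 : Real.log ‖x - y‖ ≤ Real.log (2 * ‖x‖ * ‖y‖) := Real.log_le_log hd0 h2
    rw [Real.log_mul (by positivity) hb0.ne', Real.log_mul two_ne_zero ha.ne'] at h3
    rw [hmin0]
    linarith
  · have hmin0 : min (Real.log ‖y‖) 0 = Real.log ‖y‖ :=
      min_eq_left (le_of_lt (Real.log_neg hb0 hb1))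
    have h2 : ‖x - y‖ ≤ 2 * ‖x‖ := by nlinarith
    have h3 : Real.log ‖x - y‖ ≤ Real.log (2 * ‖x‖) := Real.log_le_log hd0 h2
    rw [Real.log_mul two_ne_zero ha.ne'] at h3
    rw [hmin0]
    linarith

/-- One-sided bound used to majorize `|log (b/d)|`. -/
lemma key19' (X b d : ℝ) (hX : 0 ≤ X) (hb : 0 < b) (hd : 0 < d) (hbd : b ≤ X + d) :
    Real.log b - Real.log d
      ≤ Real.log (1 + X) + Real.log 2 + -min (Real.log d) 0 := by
  have h1X : (0:ℝ) < 1 + X := by linarith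
  rcases le_or_gt d 1 with hd1 | hd1
  · have hmin : min (Real.log d) 0 = Real.log d := min_eq_left (Real.log_nonpos hd.le hd1)
    have h2 : b ≤ 2 * (1 + X) := by linarith
    have h3 : Real.log b ≤ Real.log (2 * (1 + X)) := Real.log_le_log hb h2
    rw [Real.log_mul two_ne_zero h1X.ne'] at h3
    rw [hmin]
    linarith
  · have hmin : min (Real.log d) 0 = 0 := min_eq_right (Real.log_nonneg hd1.le)
    have h2 : b ≤ 2 * (1 + X) * d := by nlinarith
    have h3 : Real.log b ≤ Real.log (2 * (1 + X) * d) := Real.log_le_log hb h2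
    rw [Real.log_mul (by positivity) hd.ne', Real.log_mul two_ne_zero h1X.ne'] at h3
    rw [hmin]
    linarith

/-- Global bound for `|log (‖y‖/‖x-y‖)|`. -/
lemma key19'' (x y : E4) :
    |Real.log (‖y‖ / ‖x - y‖)|
      ≤ Real.log (1 + ‖x‖) + Real.log 2
        + -min (Real.log ‖y‖) 0 + -min (Real.log ‖x - y‖) 0 := by
  have hX : (0:ℝ) ≤ ‖x‖ := norm_nonneg x
  have hm1 : 0 ≤ -min (Real.log ‖y‖) 0 := by simp [min_le_right]
  have hm2 : 0 ≤ -min (Real.log ‖x - y‖) 0 := by simp [min_le_right]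
  have hl1 : 0 ≤ Real.log (1 + ‖x‖) := Real.log_nonneg (by linarith)
  have hl2 : 0 ≤ Real.log 2 := (Real.log_pos one_lt_two).le
  rcases eq_or_lt_of_le (norm_nonneg y) with hb0 | hb0
  · rw [← hb0, zero_div, Real.log_zero, abs_zero]
    simp only [min_self, neg_zero]
    linarith
  rcases eq_or_lt_of_le (norm_nonneg (x - y)) with hd0 | hd0
  · rw [show ‖y‖ / ‖x - y‖ = 0 by rw [← hd0]; exact div_zero _, Real.log_zero, abs_zero]
    linarith
  rw [Real.log_div hb0.ne' hd0.ne', abs_sub_le_iff]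
  constructor
  · have h5 : ‖y‖ ≤ ‖x‖ + ‖x - y‖ := by
      have h6 := norm_sub_le x (x - y)
      rwa [sub_sub_cancel] at h6
    have := key19' ‖x‖ ‖y‖ ‖x - y‖ hX hb0 hd0 h5
    linarith
  · have hd : ‖x - y‖ ≤ ‖x‖ + ‖y‖ := norm_sub_le x y
    have := key19' ‖x‖ ‖x - y‖ ‖y‖ hX hd0 hb0 hd
    linarith

set_option maxHeartbeats 1000000 in
open Set Metric Topology in
theorem stmt19 (p : ℝ) (hp : 0 < p) (u : E4 → ℝ) (Λ : ℝ) (hΛ : 0 < Λ)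
    (hu : NormalSolution (fun x => 1 + ‖x‖ ^ p) u Λ) :
    (∃ C : ℝ, ∃ R : ℝ, 1 ≤ R ∧ ∀ x : E4, R ≤ ‖x‖ →
      -(Λ / (8 * π ^ 2)) * Real.log ‖x‖ - C ≤ u x) ∧
    (4 + p) * 2 * π ^ 2 < Λ := by
  obtain ⟨hu_cont, hf_int, hΛ_eq, c, hc⟩ := hu
  simp only [] at hf_int hΛ_eq hc
  set f : E4 → ℝ := fun y => (1 + ‖y‖ ^ p) * Real.exp (4 * u y) with hf_def
  have hπ : (0:ℝ) < π := Real.pi_pos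
  have h8 : (0:ℝ) < 8 * π ^ 2 := by positivity
  have h8' : (0:ℝ) < 1 / (8 * π ^ 2) := by positivity
  have hf_pos : ∀ y, 0 < f y := by
    intro y
    have : (0:ℝ) ≤ ‖y‖ ^ p := Real.rpow_nonneg (norm_nonneg y) p
    exact mul_pos (by linarith) (Real.exp_pos _)
  have hf_cont : Continuous f := by
    refine Continuous.mul ?_ (Real.continuous_exp.comp (continuous_const.mul hu_cont))
    exact continuous_const.add (continuous_norm.rpow_const fun y => Or.inr hp.le)
  have huniv : volume (univ : Set E4) = ⊤ :=
    measure_univ_of_isAddLeftInvariant (volume : Measure E4)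
  -- integrability of `(-min (log ‖x₀ - y‖) 0) * f y` for every center `x₀`
  have htrans : ∀ x₀ : E4, Integrable (fun y : E4 => -min (Real.log ‖x₀ - y‖) 0 * f y) := by
    intro x₀
    obtain ⟨z, hz, hzmax'⟩ := (isCompact_closedBall x₀ 1).exists_isMaxOn
      ⟨x₀, mem_closedBall_self zero_le_one⟩ hf_cont.continuousOn
    have hM0 : 0 ≤ f z := (hf_pos z).le
    refine Integrable.mono' ((intlog19.comp_sub_left x₀).const_mul (f z)) ?_
      (Eventually.of_forall fun y => ?_)
    · exact ((((Real.measurable_log.comp (measurable_norm.comp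
        (measurable_const.sub measurable_id))).min measurable_const).neg).mul
        hf_cont.measurable).aestronglyMeasurable
    · rcases le_or_gt ‖x₀ - y‖ 1 with h | h
      · have hminle : 0 ≤ -min (Real.log ‖x₀ - y‖) 0 := by simp [min_le_right]
        have hmem : y ∈ closedBall x₀ 1 := by
          rw [mem_closedBall, dist_comm, dist_eq_norm]
          exact h
        have hfy : f y ≤ f z := hzmax' hmem
        rw [Real.norm_eq_abs, abs_mul, abs_of_nonneg hminle, abs_of_pos (hf_pos y)]
        calc -min (Real.log ‖x₀ - y‖) 0 * f y ≤ -min (Real.log ‖x₀ - y‖) 0 * f z :=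
              mul_le_mul_of_nonneg_left hfy hminle
          _ = f z * -min (Real.log ‖x₀ - y‖) 0 := mul_comm _ _
      · have : min (Real.log ‖x₀ - y‖) 0 = 0 := min_eq_right (Real.log_nonneg h.le)
        simp [this]
  have hminf_int : Integrable (fun y : E4 => min (Real.log ‖y‖) 0 * f y) := by
    have h1 : (fun y : E4 => min (Real.log ‖y‖) 0 * f y)
        = fun y : E4 => -(-min (Real.log ‖0 - y‖) 0 * f y) := by
      funext y
      rw [zero_sub, norm_neg]
      ring
    rw [h1]
    exact (htrans 0).neg
  -- `log (‖y‖/‖x-y‖) * f y` is integrable for every `x`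
  have hg_int : ∀ x : E4, Integrable (fun y : E4 => Real.log (‖y‖ / ‖x - y‖) * f y) := by
    intro x
    have hmaj : Integrable (fun y : E4 =>
        (Real.log (1 + ‖x‖) + Real.log 2) * f y
          + -min (Real.log ‖y‖) 0 * f y + -min (Real.log ‖x - y‖) 0 * f y) := by
      have h := ((hf_int.const_mul (Real.log (1 + ‖x‖) + Real.log 2)).add
        hminf_int.neg).add (htrans x)
      refine h.congr (Eventually.of_forall fun y => ?_)
      simp [neg_mul]
    refine Integrable.mono' hmaj ?_ (Eventually.of_forall fun y => ?_)
    · refine (Measurable.mul ?_ hf_cont.measurable).aestronglyMeasurable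
      exact Real.measurable_log.comp
        (measurable_norm.div (measurable_norm.comp (measurable_const.sub measurable_id)))
    · rw [Real.norm_eq_abs, abs_mul, abs_of_pos (hf_pos y)]
      have h1 := key19'' x y
      have h2 : (0:ℝ) ≤ f y := (hf_pos y).le
      calc |Real.log (‖y‖ / ‖x - y‖)| * f y
          ≤ (Real.log (1 + ‖x‖) + Real.log 2
              + -min (Real.log ‖y‖) 0 + -min (Real.log ‖x - y‖) 0) * f y :=
            mul_le_mul_of_nonneg_right h1 h2
        _ = (Real.log (1 + ‖x‖) + Real.log 2) * f y
              + -min (Real.log ‖y‖) 0 * f y + -min (Real.log ‖x - y‖) 0 * f y := by ring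
  -- the additive constant must be zero
  rcases eq_or_ne c 0 with hc0 | hc0
  · subst hc0
    simp only [add_zero] at hc
    -- part-1 constants
    have hψf_int : Integrable (fun y : E4 => (-Real.log 2 + min (Real.log ‖y‖) 0) * f y) := by
      have := (hf_int.const_mul (-Real.log 2)).add hminf_int
      refine this.congr (Eventually.of_forall fun y => ?_)
      simp [add_mul]
    set B : ℝ := ∫ y : E4, (-Real.log 2 + min (Real.log ‖y‖) 0) * f y with hB_def
    set C : ℝ := (1 / (8 * π ^ 2)) * |B| with hC_def
    have habsB : -C ≤ (1 / (8 * π ^ 2)) * B := by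
      rw [hC_def, ← mul_neg]
      exact mul_le_mul_of_nonneg_left (neg_abs_le B) h8'.le
    -- part 1
    have main : ∀ x : E4, 1 ≤ ‖x‖ → -(Λ / (8 * π ^ 2)) * Real.log ‖x‖ - C ≤ u x := by
      intro x hx
      have hlogx : 0 ≤ Real.log ‖x‖ := Real.log_nonneg hx
      have e2 : u x + (Λ / (8 * π ^ 2)) * Real.log ‖x‖
          = (1 / (8 * π ^ 2)) * ∫ y : E4,
              (Real.log ‖x‖ * f y + Real.log (‖y‖ / ‖x - y‖) * f y) := by
        rw [integral_add (hf_int.const_mul _) (hg_int x), integral_const_mul, ← hΛ_eq, hc x]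
        ring
      have e3 : B ≤ ∫ y : E4, (Real.log ‖x‖ * f y + Real.log (‖y‖ / ‖x - y‖) * f y) := by
        refine integral_mono hψf_int ((hf_int.const_mul _).add (hg_int x)) fun y => ?_
        have h1 := key19 x y hx
        calc (-Real.log 2 + min (Real.log ‖y‖) 0) * f y
            ≤ (Real.log ‖x‖ + Real.log (‖y‖ / ‖x - y‖)) * f y :=
              mul_le_mul_of_nonneg_right h1 (hf_pos y).le
          _ = Real.log ‖x‖ * f y + Real.log (‖y‖ / ‖x - y‖) * f y := add_mul _ _ _
      have e4 := mul_le_mul_of_nonneg_left e3 h8'.le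
      linarith
    refine ⟨⟨C, 1, le_refl 1, main⟩, ?_⟩
    -- part 2
    by_contra hcon
    push_neg at hcon
    set q : ℝ := p - Λ / (2 * π ^ 2) with hq_def
    have h2π : (0:ℝ) < 2 * π ^ 2 := by positivity
    have hq4 : -4 ≤ q := by
      have : Λ / (2 * π ^ 2) ≤ 4 + p := by
        rw [div_le_iff₀ h2π]
        nlinarith
      rw [hq_def]; linarith
    have hfl : ∀ x : E4, 1 ≤ ‖x‖ → Real.exp (-(4 * C)) * ‖x‖ ^ q ≤ f x := by
      intro x hx
      have hx0 : (0:ℝ) < ‖x‖ := lt_of_lt_of_le one_pos hx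
      have h1 : Real.exp (4 * (-(Λ / (8 * π ^ 2)) * Real.log ‖x‖ - C)) ≤ Real.exp (4 * u x) := by
        apply Real.exp_le_exp.mpr
        have := main x hx
        linarith
      have h2 : Real.exp (4 * (-(Λ / (8 * π ^ 2)) * Real.log ‖x‖ - C))
          = Real.exp (-(4 * C)) * ‖x‖ ^ (-(Λ / (2 * π ^ 2))) := by
        rw [Real.rpow_def_of_pos hx0, ← Real.exp_add]
        congr 1
        field_simp
        ring
      have h3 : Real.exp (-(4 * C)) * ‖x‖ ^ q
          = ‖x‖ ^ p * (Real.exp (-(4 * C)) * ‖x‖ ^ (-(Λ / (2 * π ^ 2)))) := by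
        rw [hq_def, sub_eq_add_neg, Real.rpow_add hx0]
        ring
      have h4 : (0:ℝ) ≤ ‖x‖ ^ p := Real.rpow_nonneg (norm_nonneg x) p
      calc Real.exp (-(4 * C)) * ‖x‖ ^ q
          = ‖x‖ ^ p * Real.exp (4 * (-(Λ / (8 * π ^ 2)) * Real.log ‖x‖ - C)) := by
            rw [h3, h2]
        _ ≤ ‖x‖ ^ p * Real.exp (4 * u x) := mul_le_mul_of_nonneg_left h1 h4
        _ ≤ (1 + ‖x‖ ^ p) * Real.exp (4 * u x) := by
            have := (Real.exp_pos (4 * u x)).le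
            nlinarith
    set v : ℝ := (volume (ball (0:E4) 1)).toReal with hv_def
    have hv0 : 0 < v :=
      ENNReal.toReal_pos (measure_ball_pos _ _ one_pos).ne' measure_ball_lt_top.ne
    set δ : ℝ := Real.exp (-(4 * C)) * (15 / 16) * v with hδ_def
    have hδ0 : 0 < δ := by positivity
    have hA : ∀ n : ℕ,
        δ ≤ ∫ x in ball (0:E4) (2 * ((n:ℝ) + 1)) \ closedBall 0 ((n:ℝ) + 1), f x := by
      intro n
      set r : ℝ := (n:ℝ) + 1 with hr_def
      have hr1 : 1 ≤ r := by
        rw [hr_def]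
        have : (0:ℝ) ≤ (n:ℝ) := Nat.cast_nonneg n
        linarith
      have hr0 : (0:ℝ) < r := lt_of_lt_of_le one_pos hr1
      set A : Set E4 := ball (0:E4) (2 * r) \ closedBall 0 r with hA_def
      have hAm : MeasurableSet A := measurableSet_ball.diff measurableSet_closedBall
      have hspow : (r:ℝ) ^ (4:ℕ) ≤ (2 * r) ^ (4:ℕ) :=
        pow_le_pow_left₀ hr0.le (by linarith) 4
      have hvol : (volume A).toReal = 15 * r ^ 4 * v := by
        rw [hA_def, measure_diff (closedBall_subset_ball (by linarith))
          measurableSet_closedBall.nullMeasurableSet measure_closedBall_lt_top.ne]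
        rw [Measure.addHaar_ball _ _ (by linarith : (0:ℝ) ≤ 2 * r),
          Measure.addHaar_closedBall _ _ hr0.le, finrank_euclideanSpace_fin]
        rw [← ENNReal.sub_mul (fun _ _ => measure_ball_lt_top.ne)]
        rw [ENNReal.toReal_mul, ← ENNReal.ofReal_sub _ (by positivity),
          ENNReal.toReal_ofReal (by linarith)]
        rw [← hv_def]
        ring
      have hpt : ∀ x ∈ A, Real.exp (-(4 * C)) * (2 * r) ^ (-4:ℝ) ≤ f x := by
        intro x hxA
        obtain ⟨hx1, hx2⟩ := hxA
        rw [mem_ball, dist_zero_right] at hx1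
        rw [mem_closedBall, dist_zero_right, not_le] at hx2
        have hx0 : (0:ℝ) < ‖x‖ := lt_trans hr0 hx2
        have hxge1 : (1:ℝ) ≤ ‖x‖ := le_trans hr1 hx2.le
        refine le_trans ?_ (hfl x hxge1)
        have e5 : ‖x‖ ^ q = ‖x‖ ^ (q + 4) * ‖x‖ ^ (-4:ℝ) := by
          rw [← Real.rpow_add hx0]; ring_nf
        have e6 : (1:ℝ) ≤ ‖x‖ ^ (q + 4) := Real.one_le_rpow hxge1 (by linarith)
        have e7 : (2 * r) ^ (-4:ℝ) ≤ ‖x‖ ^ (-4:ℝ) :=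
          Real.rpow_le_rpow_of_nonpos hx0 hx1.le (by norm_num)
        have e8 : (0:ℝ) ≤ (2 * r) ^ (-4:ℝ) := Real.rpow_nonneg (by linarith) _
        rw [e5]
        have e9 : (2 * r) ^ (-4:ℝ) ≤ ‖x‖ ^ (q + 4) * ‖x‖ ^ (-4:ℝ) := by
          calc (2 * r) ^ (-4:ℝ) = 1 * (2 * r) ^ (-4:ℝ) := (one_mul _).symm
            _ ≤ ‖x‖ ^ (q + 4) * ‖x‖ ^ (-4:ℝ) := by
              apply mul_le_mul e6 e7 e8
              exact le_trans zero_le_one e6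
        exact mul_le_mul_of_nonneg_left e9 (Real.exp_pos _).le
      have hconst_int : IntegrableOn (fun _ : E4 => Real.exp (-(4 * C)) * (2 * r) ^ (-4:ℝ)) A := by
        apply (integrableOn_const_iff enorm_ne_top).mpr
        right
        calc volume A ≤ volume (ball (0:E4) (2 * r)) := measure_mono diff_subset
          _ < ⊤ := measure_ball_lt_top
      have hint : ∫ _x in A, (Real.exp (-(4 * C)) * (2 * r) ^ (-4:ℝ)) ∂volume
          ≤ ∫ x in A, f x :=
        setIntegral_mono_on hconst_int (hf_int.integrableOn) hAm hpt
      rw [setIntegral_const] at hint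
      refine le_trans (le_of_eq ?_) hint
      rw [smul_eq_mul, measureReal_def, hvol]
      have e10 : (2 * r) ^ (-4:ℝ) = ((2 * r) ^ (4:ℕ))⁻¹ := by
        rw [← Real.rpow_natCast (2*r) 4, ← Real.rpow_neg (by linarith)]
        norm_num
      rw [e10, hδ_def]
      have e11 : ((2 * r) ^ (4:ℕ)) = 16 * r ^ 4 := by ring
      rw [e11]
      have hr4 : (0:ℝ) < r ^ 4 := by positivity
      field_simp
    have hmono : Monotone (fun n : ℕ => ball (0:E4) ((n:ℝ) + 1)) := by
      intro m n hmn
      apply ball_subset_ball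
      have : (m:ℝ) ≤ (n:ℝ) := Nat.cast_le.mpr hmn
      linarith
    have hunion : (⋃ n : ℕ, ball (0:E4) ((n:ℝ) + 1)) = univ := by
      ext x
      simp only [mem_iUnion, mem_ball, dist_zero_right, mem_univ, iff_true]
      obtain ⟨n, hn⟩ := exists_nat_gt ‖x‖
      exact ⟨n, by linarith⟩
    have htend : Tendsto (fun n : ℕ => ∫ x in ball (0:E4) ((n:ℝ) + 1), f x) atTop
        (𝓝 (∫ x, f x)) := by
      have := tendsto_setIntegral_of_monotone (fun n : ℕ => measurableSet_ball) hmono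
        (by rw [hunion]; exact hf_int.integrableOn)
      rwa [hunion, setIntegral_univ] at this
    have htend2 : Tendsto
        (fun n : ℕ => (∫ x, f x) - ∫ x in ball (0:E4) ((n:ℝ) + 1), f x) atTop (𝓝 0) := by
      have := htend.const_sub (∫ x, f x)
      simpa using this
    have hle : ∀ n : ℕ, δ ≤ (∫ x, f x) - ∫ x in ball (0:E4) ((n:ℝ) + 1), f x := by
      intro n
      have h1 := hA n
      have hsub : ball (0:E4) (2 * ((n:ℝ) + 1)) \ closedBall 0 ((n:ℝ) + 1)
          ⊆ (ball (0:E4) ((n:ℝ) + 1))ᶜ := by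
        intro x hx
        exact fun hmem => hx.2 (ball_subset_closedBall hmem)
      have h2 : ∫ x in ball (0:E4) (2 * ((n:ℝ) + 1)) \ closedBall 0 ((n:ℝ) + 1), f x
          ≤ ∫ x in (ball (0:E4) ((n:ℝ) + 1))ᶜ, f x := by
        refine setIntegral_mono_set hf_int.integrableOn ?_ (HasSubset.Subset.eventuallyLE hsub)
        exact Eventually.of_forall fun y => (hf_pos y).le
      have h3 : (∫ x in ball (0:E4) ((n:ℝ) + 1), f x)
          + ∫ x in (ball (0:E4) ((n:ℝ) + 1))ᶜ, f x = ∫ x, f x :=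
        integral_add_compl measurableSet_ball hf_int
      linarith
    have : δ ≤ 0 := ge_of_tendsto' htend2 hle
    linarith
  · -- c ≠ 0 : impossible
    exfalso
    have hnotint : ∀ x : E4,
        ¬ Integrable (fun y : E4 => Real.log (‖y‖ / ‖x - y‖) * f y + c) := by
      intro x hInt
      have hcc : Integrable (fun _ : E4 => c) := by
        have h1 : (fun _ : E4 => c)
            = ((fun y : E4 => Real.log (‖y‖ / ‖x - y‖) * f y + c)
              - fun y : E4 => Real.log (‖y‖ / ‖x - y‖) * f y) := by
          funext y
          simp
        rw [h1]
        exact hInt.sub (hg_int x)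
      rw [integrable_const_iff] at hcc
      rcases hcc with h | h
      · exact hc0 h
      · have h := h.measure_univ_lt_top
        rw [huniv] at h
        exact lt_irrefl _ h
    have hu0 : ∀ x : E4, u x = 0 := by
      intro x
      rw [hc x, integral_undef (hnotint x), mul_zero]
    have hone : Integrable (fun _ : E4 => (1:ℝ)) := by
      refine hf_int.mono' aestronglyMeasurable_const (Eventually.of_forall fun y => ?_)
      have : (0:ℝ) ≤ ‖y‖ ^ p := Real.rpow_nonneg (norm_nonneg y) p
      simp only [hf_def, hu0 y, mul_zero, Real.exp_zero, mul_one, norm_one]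
      linarith
    rw [integrable_const_iff] at hone
    rcases hone with h | h
    · exact one_ne_zero h
    · have h := h.measure_univ_lt_top
      rw [huniv] at h
      exact lt_irrefl _ h
end
end
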